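/- Let μ be a probability measure with finite entropy on a countable group G. If there exist finite subsets A_n ⊂ G with (1/n) log |A_n| → 0 and μ^{*n}(A_n) → 1, then the asymptotic entropy h(μ) = lim_n H(μ^{*n})/n equals 0. -/

import Mathlib

open Filter
open scoped Classical

/-- Convolution of two measures (given by densities) on a countable group:
`(μ * ν)(g) = ∑ₕ μ(g h⁻¹) ν(h)`. -/
noncomputable def conv {G : Type*} [Group G] (μ ν : G → ℝ) : G → ℝ :=
  fun g => ∑' h, μ (g * h⁻¹) * ν h

/-- The `n`-fold convolution power `μ^{*n}` (with `μ^{*0}` the Dirac mass at the identity). -/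
noncomputable def convPow {G : Type*} [Group G] (μ : G → ℝ) : ℕ → G → ℝ
  | 0 => fun g => if g = 1 then 1 else 0
  | n + 1 => conv (convPow μ n) μ

/-- Shannon entropy `H(μ) = -∑_g μ(g) log μ(g)`. -/
noncomputable def entropy {G : Type*} (μ : G → ℝ) : ℝ :=
  ∑' g, Real.negMulLog (μ g)

section aux
variable {α β : Type*}

lemma hasSum_prod_of_nonneg {f : α × β → ℝ} (h0 : ∀ p, 0 ≤ f p)
    {g : α → ℝ} (hfib : ∀ a, HasSum (fun b => f (a, b)) (g a)) {S : ℝ} (hg : HasSum g S) :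
    HasSum f S := by
  have hsf : Summable f := by
    refine (summable_prod_of_nonneg h0).2 ⟨fun a => (hfib a).summable, ?_⟩
    have : (fun a => ∑' b, f (a, b)) = g := funext fun a => (hfib a).tsum_eq
    rw [this]; exact hg.summable
  have h2 := hsf.hasSum
  have h3 : ∑' p, f p = S := by
    rw [Summable.tsum_prod' hsf (fun a => (hfib a).summable)]
    rw [tsum_congr (fun a => (hfib a).tsum_eq)]
    exact hg.tsum_eq
  rwa [h3] at h2

variable {G : Type*}

lemma hasSum_pi_prod : ∀ (n : ℕ) (f : Fin n → G → ℝ) (a : Fin n → ℝ),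
    (∀ i x, 0 ≤ f i x) → (∀ i, HasSum (f i) (a i)) →
    HasSum (fun s : Fin n → G => ∏ i, f i (s i)) (∏ i, a i) := by
  intro n
  induction n with
  | zero =>
    intro f a _ _
    simpa using hasSum_unique (f := fun _ : Fin 0 → G => (1 : ℝ))
  | succ n IH =>
    intro f a h0 hs
    rw [← (Fin.snocEquiv (fun _ => G)).hasSum_iff]
    have hcomp : ((fun s : Fin (n+1) → G => ∏ i, f i (s i)) ∘ (Fin.snocEquiv (fun _ => G)))
        = fun p : G × (Fin n → G) =>
            (∏ i : Fin n, f i.castSucc (p.2 i)) * f (Fin.last n) p.1 := by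
      funext p
      simp only [Function.comp_apply, Fin.snocEquiv_apply]
      rw [Fin.prod_univ_castSucc]
      simp [Fin.snoc_castSucc, Fin.snoc_last]
    rw [hcomp]
    have hfin : (∏ i, a i) = (∏ i : Fin n, a i.castSucc) * a (Fin.last n) :=
      Fin.prod_univ_castSucc a
    rw [hfin]
    refine hasSum_prod_of_nonneg (fun p => ?_)
      (g := fun x => (∏ i : Fin n, a i.castSucc) * f (Fin.last n) x) (fun x => ?_) ?_
    · exact mul_nonneg (Finset.prod_nonneg fun i _ => h0 _ _) (h0 _ _)
    · exact (IH (fun i => f i.castSucc) (fun i => a i.castSucc)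
        (fun i x => h0 _ _) (fun i => hs _)).mul_right _
    · exact (hs (Fin.last n)).mul_left _

end aux

section walk
variable {G : Type*} [Group G] {μ : G → ℝ}

lemma prod_snoc {n : ℕ} (t : Fin n → G) (x : G) :
    (List.ofFn (Fin.snoc t x : Fin (n+1) → G)).prod = (List.ofFn t).prod * x := by
  rw [List.ofFn_succ']
  simp [Fin.snoc_castSucc, Fin.snoc_last]

lemma convPow_nonneg (hnn : ∀ g, 0 ≤ μ g) : ∀ n g, 0 ≤ convPow μ n g := by
  intro n
  induction n with
  | zero => intro g; simp only [convPow]; split <;> norm_num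
  | succ n IH =>
    intro g
    exact tsum_nonneg fun h => mul_nonneg (IH _) (hnn h)

lemma hasSum_P (hnn : ∀ g, 0 ≤ μ g) (h1 : HasSum μ 1) (n : ℕ) :
    HasSum (fun s : Fin n → G => ∏ i, μ (s i)) 1 := by
  simpa using hasSum_pi_prod n (fun _ => μ) (fun _ => 1) (fun _ => hnn) (fun _ => h1)

lemma hasSum_convPow_of_fiber (hnn : ∀ g, 0 ≤ μ g) (h1 : HasSum μ 1) {n : ℕ}
    (hfib : ∀ g, HasSum
      (fun s : Fin n → G => if (List.ofFn s).prod = g then ∏ i, μ (s i) else 0)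
      (convPow μ n g)) :
    HasSum (convPow μ n) 1 := by
  set π : (Fin n → G) → G := fun s => (List.ofFn s).prod with hπ
  set P : (Fin n → G) → ℝ := fun s => ∏ i, μ (s i) with hP
  have h2 : HasSum (P ∘ (Equiv.sigmaFiberEquiv π)) 1 :=
    (Equiv.hasSum_iff (Equiv.sigmaFiberEquiv π)).2 (hasSum_P hnn h1 n)
  refine h2.sigma fun g => ?_
  show HasSum (fun c : {s // π s = g} => P c.val) (convPow μ n g)
  have hsupp : Function.support (fun s => if π s = g then P s else 0) ⊆ {s | π s = g} := by
    intro s hs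
    by_contra h
    simp only [Set.mem_setOf_eq] at h
    simp [h] at hs
  have h3 := (hasSum_subtype_iff_of_support_subset hsupp).2 (hfib g)
  have heq : (fun c : {s // π s = g} => P c.val)
      = ((fun s => if π s = g then P s else 0) ∘ (Subtype.val : {s | π s = g} → _)) := by
    funext c
    rw [Function.comp_apply, if_pos c.2]
  rw [heq]
  exact h3

lemma fiberRep (hnn : ∀ g, 0 ≤ μ g) (h1 : HasSum μ 1) : ∀ (n : ℕ) (g : G),
    HasSum (fun s : Fin n → G => if (List.ofFn s).prod = g then ∏ i, μ (s i) else 0)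
      (convPow μ n g) := by
  intro n
  induction n with
  | zero =>
    intro g
    have h := hasSum_unique
      (f := fun s : Fin 0 → G => if (List.ofFn s).prod = g then ∏ i, μ (s i) else 0)
    simp only [List.ofFn_zero, List.prod_nil, Finset.univ_eq_empty, Finset.prod_empty] at h
    convert h using 1
    · funext s; simp
    · show (if g = 1 then (1:ℝ) else 0) = _
      by_cases hg : g = 1 <;> simp [hg, eq_comm]
  | succ n IH =>
    intro g
    have hle1 : ∀ g', convPow μ n g' ≤ 1 :=
      fun g' => le_hasSum (hasSum_convPow_of_fiber hnn h1 IH) g'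
        (fun j _ => convPow_nonneg hnn n j)
    show HasSum _ (conv (convPow μ n) μ g)
    rw [← (Fin.snocEquiv (fun _ => G)).hasSum_iff]
    have hcomp : ((fun s : Fin (n+1) → G =>
          if (List.ofFn s).prod = g then ∏ i, μ (s i) else 0) ∘ (Fin.snocEquiv (fun _ => G)))
        = fun p : G × (Fin n → G) =>
            if (List.ofFn p.2).prod * p.1 = g then (∏ i, μ (p.2 i)) * μ p.1 else 0 := by
      funext p
      have hsn : (⇑(Fin.snocEquiv fun _ => G) p) = (Fin.snoc p.2 p.1 : Fin (n+1) → G) := rfl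
      rw [Function.comp_apply, hsn, prod_snoc p.2 p.1, Fin.prod_univ_castSucc]
      simp [Fin.snoc_castSucc, Fin.snoc_last]
    rw [hcomp]
    refine hasSum_prod_of_nonneg (fun p => ?_)
      (g := fun x => convPow μ n (g * x⁻¹) * μ x) (fun x => ?_) ?_
    · split
      · exact mul_nonneg (Finset.prod_nonneg fun i _ => hnn _) (hnn _)
      · exact le_refl 0
    · have h := (IH (g * x⁻¹)).mul_right (μ x)
      have heq : (fun t : Fin n → G =>
            (if (List.ofFn t).prod = g * x⁻¹ then ∏ i, μ (t i) else 0) * μ x)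
          = fun t => if (List.ofFn t).prod * x = g then (∏ i, μ (t i)) * μ x else 0 := by
        funext t
        by_cases hc : (List.ofFn t).prod * x = g
        · rw [if_pos (eq_mul_inv_iff_mul_eq.2 hc), if_pos hc]
        · rw [if_neg (fun hh => hc (eq_mul_inv_iff_mul_eq.1 hh)), if_neg hc, zero_mul]
      rwa [heq] at h
    · have hsummable : Summable (fun x => convPow μ n (g * x⁻¹) * μ x) := by
        refine Summable.of_nonneg_of_le
          (fun x => mul_nonneg (convPow_nonneg hnn n _) (hnn x))
          (fun x => ?_) h1.summable
        calc convPow μ n (g * x⁻¹) * μ x ≤ 1 * μ x :=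
          mul_le_mul_of_nonneg_right (hle1 _) (hnn x)
        _ = μ x := one_mul _
      have := hsummable.hasSum
      exact this
end walk

section walk2
variable {G : Type*} [Group G] {μ : G → ℝ}

lemma hasSum_convPow (hnn : ∀ g, 0 ≤ μ g) (h1 : HasSum μ 1) (n : ℕ) :
    HasSum (convPow μ n) 1 :=
  hasSum_convPow_of_fiber hnn h1 (fiberRep hnn h1 n)

lemma convPow_le_one (hnn : ∀ g, 0 ≤ μ g) (h1 : HasSum μ 1) (n : ℕ) (g : G) :
    convPow μ n g ≤ 1 :=
  le_hasSum (hasSum_convPow hnn h1 n) g (fun j _ => convPow_nonneg hnn n j)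

lemma summable_of_le_P (hnn : ∀ g, 0 ≤ μ g) (h1 : HasSum μ 1) {n : ℕ}
    {f : (Fin n → G) → ℝ} (h0 : ∀ s, 0 ≤ f s) (hle : ∀ s, f s ≤ ∏ i, μ (s i)) :
    Summable f :=
  Summable.of_nonneg_of_le h0 hle (hasSum_P hnn h1 n).summable

lemma ite_le_P (hnn : ∀ g, 0 ≤ μ g) {n : ℕ} (c : Prop) [Decidable c] (s : Fin n → G) :
    (if c then ∏ i, μ (s i) else 0) ≤ ∏ i, μ (s i) := by
  split
  · exact le_refl _
  · exact Finset.prod_nonneg fun i _ => hnn _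

lemma ite_P_nonneg (hnn : ∀ g, 0 ≤ μ g) {n : ℕ} (c : Prop) [Decidable c] (s : Fin n → G) :
    0 ≤ (if c then ∏ i, μ (s i) else 0) := by
  split
  · exact Finset.prod_nonneg fun i _ => hnn _
  · exact le_refl 0

lemma summable_constrained (hnn : ∀ g, 0 ≤ μ g) (h1 : HasSum μ 1) {n : ℕ}
    {f : (Fin n → G) → ℝ} (h0 : ∀ s, 0 ≤ f s) (hle : ∀ s, f s ≤ ∏ i, μ (s i)) :
    Summable f := summable_of_le_P hnn h1 h0 hle

lemma hasSum_constrained (hnn : ∀ g, 0 ≤ μ g) (h1 : HasSum μ 1) (n : ℕ) (B : Finset G) :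
    HasSum (fun s : Fin n → G => if (List.ofFn s).prod ∈ B then ∏ i, μ (s i) else 0)
      (∑ g ∈ B, convPow μ n g) := by
  have hsum : Summable (fun s : Fin n → G => if (List.ofFn s).prod ∈ B then ∏ i, μ (s i) else 0) :=
    summable_constrained hnn h1 (fun s => ite_P_nonneg hnn _ s) (fun s => ite_le_P hnn _ s)
  have h2 : HasSum ((fun s : Fin n → G => if (List.ofFn s).prod ∈ B then ∏ i, μ (s i) else 0)
        ∘ (Equiv.sigmaFiberEquiv (fun s : Fin n → G => (List.ofFn s).prod)))
      (∑' s : Fin n → G, if (List.ofFn s).prod ∈ B then ∏ i, μ (s i) else 0) :=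
    (Equiv.hasSum_iff _).2 hsum.hasSum
  have h3 : ∀ g : G, HasSum
      (fun c : {s : Fin n → G // (List.ofFn s).prod = g} =>
        if (List.ofFn c.val).prod ∈ B then ∏ i, μ (c.val i) else 0)
      (if g ∈ B then convPow μ n g else 0) := by
    intro g
    by_cases hg : g ∈ B
    · rw [if_pos hg]
      have hsupp : Function.support
          (fun s : Fin n → G => if (List.ofFn s).prod = g then ∏ i, μ (s i) else 0)
          ⊆ {s | (List.ofFn s).prod = g} := by
        intro s hs
        by_contra h
        simp only [Set.mem_setOf_eq] at h
        simp [h] at hs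
      have h4 := (hasSum_subtype_iff_of_support_subset hsupp).2 (fiberRep hnn h1 n g)
      have heq : (fun c : {s : Fin n → G // (List.ofFn s).prod = g} =>
            if (List.ofFn c.val).prod ∈ B then ∏ i, μ (c.val i) else 0)
          = ((fun s : Fin n → G => if (List.ofFn s).prod = g then ∏ i, μ (s i) else 0)
              ∘ (Subtype.val : {s : Fin n → G | (List.ofFn s).prod = g} → _)) := by
        funext c
        rw [Function.comp_apply, if_pos c.2, if_pos (c.2.symm ▸ hg)]
      rw [heq]
      exact h4
    · rw [if_neg hg]
      have heq : (fun c : {s : Fin n → G // (List.ofFn s).prod = g} =>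
            if (List.ofFn c.val).prod ∈ B then ∏ i, μ (c.val i) else 0)
          = fun _ => (0 : ℝ) := by
        funext c
        rw [if_neg (c.2.symm ▸ hg)]
      rw [heq]
      exact hasSum_zero
  have h4 : HasSum (fun g : G => if g ∈ B then convPow μ n g else 0)
      (∑' s : Fin n → G, if (List.ofFn s).prod ∈ B then ∏ i, μ (s i) else 0) :=
    h2.sigma fun g => h3 g
  have h5 : HasSum (fun g : G => if g ∈ B then convPow μ n g else 0)
      (∑ g ∈ B, convPow μ n g) := by
    have h6 := hasSum_sum_of_ne_finset_zero (L := SummationFilter.unconditional G)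
      (f := fun g : G => if g ∈ B then convPow μ n g else 0) (s := B)
      (fun g hg => if_neg hg)
    rwa [Finset.sum_congr rfl (fun g hg => if_pos hg)] at h6
  have := h4.unique h5
  rw [← this]
  exact hsum.hasSum

lemma hasSum_constrained_compl (hnn : ∀ g, 0 ≤ μ g) (h1 : HasSum μ 1) (n : ℕ) (B : Finset G) :
    HasSum (fun s : Fin n → G => if (List.ofFn s).prod ∉ B then ∏ i, μ (s i) else 0)
      (1 - ∑ g ∈ B, convPow μ n g) := by
  have h := (hasSum_P hnn h1 n).sub (hasSum_constrained hnn h1 n B)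
  have heq : (fun s : Fin n → G =>
        (∏ i, μ (s i)) - (if (List.ofFn s).prod ∈ B then ∏ i, μ (s i) else 0))
      = fun s => if (List.ofFn s).prod ∉ B then ∏ i, μ (s i) else 0 := by
    funext s
    by_cases hc : (List.ofFn s).prod ∈ B <;> simp [hc]
  rwa [heq] at h

end walk2

section entbound
variable {G : Type*} [Group G]

/-- The `i`-th entropy weight of a trajectory. -/
noncomputable def elli (μ : G → ℝ) {n : ℕ} (i : Fin n) (s : Fin n → G) : ℝ :=
  ∏ j, (if j = i then Real.negMulLog (μ (s j)) else μ (s j))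

variable {μ : G → ℝ}

lemma mu_le_one (hnn : ∀ g, 0 ≤ μ g) (h1 : HasSum μ 1) (x : G) : μ x ≤ 1 :=
  le_hasSum h1 x (fun j _ => hnn j)

lemma negMulLog_mu_nonneg (hnn : ∀ g, 0 ≤ μ g) (h1 : HasSum μ 1) (x : G) :
    0 ≤ Real.negMulLog (μ x) :=
  Real.negMulLog_nonneg (hnn x) (mu_le_one hnn h1 x)

lemma elli_nonneg (hnn : ∀ g, 0 ≤ μ g) (h1 : HasSum μ 1) {n : ℕ} (i : Fin n) (s : Fin n → G) :
    0 ≤ elli μ i s := by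
  refine Finset.prod_nonneg fun j _ => ?_
  split
  · exact negMulLog_mu_nonneg hnn h1 _
  · exact hnn _

lemma elli_eq {n : ℕ} (i : Fin n) (s : Fin n → G) :
    elli μ i s = Real.negMulLog (μ (s i)) * ∏ j ∈ Finset.univ.erase i, μ (s j) := by
  rw [elli, ← Finset.mul_prod_erase Finset.univ _ (Finset.mem_univ i), if_pos rfl]
  congr 1
  exact Finset.prod_congr rfl fun j hj => if_neg (Finset.ne_of_mem_erase hj)

lemma P_eq {n : ℕ} (i : Fin n) (s : Fin n → G) :
    (∏ j, μ (s j)) = μ (s i) * ∏ j ∈ Finset.univ.erase i, μ (s j) :=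
  (Finset.mul_prod_erase Finset.univ _ (Finset.mem_univ i)).symm

lemma hasSum_elli (hnn : ∀ g, 0 ≤ μ g) (h1 : HasSum μ 1)
    (hH : Summable fun g => Real.negMulLog (μ g)) {n : ℕ} (i : Fin n) :
    HasSum (fun s : Fin n → G => elli μ i s) (∑' x, Real.negMulLog (μ x)) := by
  have h0 : ∀ (j : Fin n) (x : G), 0 ≤ (if j = i then Real.negMulLog (μ x) else μ x) := by
    intro j x
    split
    · exact negMulLog_mu_nonneg hnn h1 x
    · exact hnn x
  have hsums : ∀ j : Fin n, HasSum (fun x : G => if j = i then Real.negMulLog (μ x) else μ x)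
      (if j = i then ∑' x, Real.negMulLog (μ x) else 1) := by
    intro j
    by_cases h : j = i
    · simpa [h] using hH.hasSum
    · simpa [h] using h1
  have h := hasSum_pi_prod n
    (fun j => fun x => if j = i then Real.negMulLog (μ x) else μ x)
    (fun j => if j = i then ∑' x, Real.negMulLog (μ x) else 1) h0 hsums
  rw [Finset.prod_ite_eq' Finset.univ i, if_pos (Finset.mem_univ i)] at h
  exact h

lemma P_mul_neg_log {n : ℕ} (s : Fin n → G) (hpos : 0 < ∏ j, μ (s j)) :
    (∏ j, μ (s j)) * (-Real.log (∏ j, μ (s j))) = ∑ i, elli μ i s := by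
  have hne : ∀ j ∈ Finset.univ, μ (s j) ≠ (0 : ℝ) := by
    intro j _ h0
    rw [Finset.prod_eq_zero (Finset.mem_univ j) h0] at hpos
    exact lt_irrefl 0 hpos
  rw [Real.log_prod hne]
  rw [show -(∑ j, Real.log (μ (s j))) = ∑ j, -Real.log (μ (s j)) by rw [Finset.sum_neg_distrib]]
  rw [Finset.mul_sum]
  refine Finset.sum_congr rfl fun i _ => ?_
  rw [P_eq i s, elli_eq i s, Real.negMulLog]
  ring

end entbound

section entbound2
variable {G : Type*} [Group G] {μ : G → ℝ}

lemma summable_ellSum (hnn : ∀ g, 0 ≤ μ g) (h1 : HasSum μ 1)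
    (hH : Summable fun g => Real.negMulLog (μ g)) {n : ℕ} :
    Summable (fun s : Fin n → G => ∑ i, elli μ i s) :=
  summable_sum fun i _ => (hasSum_elli hnn h1 hH i).summable

lemma negMulLog_convPow_le (hnn : ∀ g, 0 ≤ μ g) (h1 : HasSum μ 1)
    (hH : Summable fun g => Real.negMulLog (μ g)) (n : ℕ) (g : G) :
    Real.negMulLog (convPow μ n g) ≤
      ∑' s : Fin n → G, (if (List.ofFn s).prod = g then ∑ i, elli μ i s else 0) := by
  have hν := fiberRep hnn h1 n g
  have hPnn : ∀ s : Fin n → G, (0:ℝ) ≤ ∏ i, μ (s i) :=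
    fun s => Finset.prod_nonneg fun i _ => hnn _
  have hEnn : ∀ s : Fin n → G, (0:ℝ) ≤ ∑ i, elli μ i s :=
    fun s => Finset.sum_nonneg fun i _ => elli_nonneg hnn h1 i s
  have hrhs_summable : Summable (fun s : Fin n → G =>
      if (List.ofFn s).prod = g then ∑ i, elli μ i s else 0) := by
    refine Summable.of_nonneg_of_le (fun s => ?_) (fun s => ?_)
      (summable_ellSum hnn h1 hH)
    · split
      · exact hEnn s
      · exact le_refl 0
    · split
      · exact le_refl _
      · exact hEnn s
  have expand : Real.negMulLog (convPow μ n g) =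
      ∑' s : Fin n → G, (if (List.ofFn s).prod = g then ∏ i, μ (s i) else 0)
        * (-Real.log (convPow μ n g)) := by
    rw [tsum_mul_right, hν.tsum_eq, Real.negMulLog]
    ring
  rw [expand]
  refine Summable.tsum_le_tsum (fun s => ?_) (hν.summable.mul_right _) hrhs_summable
  by_cases hc : (List.ofFn s).prod = g
  · rw [if_pos hc, if_pos hc]
    rcases (hPnn s).eq_or_lt with hP0 | hPpos
    · rw [← hP0, zero_mul]
      exact hEnn s
    · have hPle : (∏ i, μ (s i)) ≤ convPow μ n g := by
        have h := le_hasSum hν s (fun j _ => ?_)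
        · rwa [if_pos hc] at h
        · split
          · exact hPnn _
          · exact le_refl 0
      have hlog : -Real.log (convPow μ n g) ≤ -Real.log (∏ i, μ (s i)) :=
        neg_le_neg (Real.log_le_log hPpos hPle)
      calc (∏ i, μ (s i)) * (-Real.log (convPow μ n g))
          ≤ (∏ i, μ (s i)) * (-Real.log (∏ i, μ (s i))) :=
            mul_le_mul_of_nonneg_left hlog (hPnn s)
        _ = ∑ i, elli μ i s := P_mul_neg_log s hPpos
  · rw [if_neg hc, if_neg hc, zero_mul]

lemma elli_constrained_le (hnn : ∀ g, 0 ≤ μ g) (h1 : HasSum μ 1)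
    (hH : Summable fun g => Real.negMulLog (μ g)) {n : ℕ} (i : Fin n)
    (C : ℝ) (hC : 0 ≤ C) (B : Finset G) :
    ∑' s : Fin n → G, (if (List.ofFn s).prod ∉ B then elli μ i s else 0)
      ≤ C * (1 - ∑ g ∈ B, convPow μ n g)
        + ∑' x : G, (if μ x < Real.exp (-C) then Real.negMulLog (μ x) else 0) := by
  set t : ℝ := Real.exp (-C) with ht
  have hPnn : ∀ s : Fin n → G, (0:ℝ) ≤ ∏ j, μ (s j) :=
    fun s => Finset.prod_nonneg fun j _ => hnn _
  -- the small-step tail function on G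
  have htail_nonneg : ∀ x : G, (0:ℝ) ≤ (if μ x < t then Real.negMulLog (μ x) else 0) := by
    intro x
    split
    · exact negMulLog_mu_nonneg hnn h1 x
    · exact le_refl 0
  have htail_summable : Summable (fun x : G => if μ x < t then Real.negMulLog (μ x) else 0) := by
    refine Summable.of_nonneg_of_le htail_nonneg (fun x => ?_) hH
    split
    · exact le_refl _
    · exact negMulLog_mu_nonneg hnn h1 x
  -- the product function R2
  have hR2 : HasSum (fun s : Fin n → G =>
      ∏ j, (if j = i then (if μ (s j) < t then Real.negMulLog (μ (s j)) else 0) else μ (s j)))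
      (∑' x : G, (if μ x < t then Real.negMulLog (μ x) else 0)) := by
    have h0 : ∀ (j : Fin n) (x : G),
        0 ≤ (if j = i then (if μ x < t then Real.negMulLog (μ x) else 0) else μ x) := by
      intro j x
      split
      · exact htail_nonneg x
      · exact hnn x
    have hsums : ∀ j : Fin n, HasSum
        (fun x : G => if j = i then (if μ x < t then Real.negMulLog (μ x) else 0) else μ x)
        (if j = i then ∑' x : G, (if μ x < t then Real.negMulLog (μ x) else 0) else 1) := by
      intro j
      by_cases h : j = i
      · simpa [h] using htail_summable.hasSum
      · simpa [h] using h1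
    have h := hasSum_pi_prod n _ _ h0 hsums
    rwa [Finset.prod_ite_eq' Finset.univ i, if_pos (Finset.mem_univ i)] at h
  have hR2nn : ∀ s : Fin n → G, (0:ℝ) ≤
      ∏ j, (if j = i then (if μ (s j) < t then Real.negMulLog (μ (s j)) else 0) else μ (s j)) := by
    intro s
    refine Finset.prod_nonneg fun j _ => ?_
    split
    · exact htail_nonneg _
    · exact hnn _
  -- R2 via erase decomposition
  have hR2eq : ∀ s : Fin n → G,
      (∏ j, (if j = i then (if μ (s j) < t then Real.negMulLog (μ (s j)) else 0) else μ (s j)))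
        = (if μ (s i) < t then Real.negMulLog (μ (s i)) else 0)
            * ∏ j ∈ Finset.univ.erase i, μ (s j) := by
    intro s
    rw [← Finset.mul_prod_erase Finset.univ _ (Finset.mem_univ i), if_pos rfl]
    congr 1
    exact Finset.prod_congr rfl fun j hj => if_neg (Finset.ne_of_mem_erase hj)
  have hcompl := hasSum_constrained_compl hnn h1 n B
  -- big-step part summable
  have hbig_summable : Summable (fun s : Fin n → G =>
      C * (if ((List.ofFn s).prod ∉ B ∧ t ≤ μ (s i)) then ∏ j, μ (s j) else 0)) := by
    refine Summable.mul_left _ ?_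
    exact summable_constrained hnn h1 (fun s => ite_P_nonneg hnn _ s) (fun s => ite_le_P hnn _ s)
  -- pointwise bound
  have hpoint : ∀ s : Fin n → G,
      (if (List.ofFn s).prod ∉ B then elli μ i s else 0)
        ≤ C * (if ((List.ofFn s).prod ∉ B ∧ t ≤ μ (s i)) then ∏ j, μ (s j) else 0)
          + ∏ j, (if j = i then (if μ (s j) < t then Real.negMulLog (μ (s j)) else 0)
              else μ (s j)) := by
    intro s
    by_cases hB : (List.ofFn s).prod ∉ B
    · rw [if_pos hB]
      by_cases hsm : μ (s i) < t
      · rw [if_neg (fun hand => absurd hsm (not_lt.2 hand.2)), mul_zero, zero_add, hR2eq s,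
          if_pos hsm, elli_eq]
      · rw [if_pos ⟨hB, not_lt.1 hsm⟩, hR2eq s, if_neg hsm, zero_mul, add_zero]
        have hmupos : 0 < μ (s i) := lt_of_lt_of_le (Real.exp_pos _) (not_lt.1 hsm)
        have hlogle : -Real.log (μ (s i)) ≤ C := by
          have := (Real.le_log_iff_exp_le hmupos).2 (not_lt.1 hsm)
          linarith
        have h2 : Real.negMulLog (μ (s i)) ≤ C * μ (s i) := by
          rw [Real.negMulLog]
          calc -μ (s i) * Real.log (μ (s i)) = μ (s i) * (-Real.log (μ (s i))) := by ring
            _ ≤ μ (s i) * C := mul_le_mul_of_nonneg_left hlogle (hnn _)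
            _ = C * μ (s i) := mul_comm _ _
        rw [elli_eq, P_eq i s]
        calc Real.negMulLog (μ (s i)) * ∏ j ∈ Finset.univ.erase i, μ (s j)
            ≤ (C * μ (s i)) * ∏ j ∈ Finset.univ.erase i, μ (s j) :=
              mul_le_mul_of_nonneg_right h2
                (Finset.prod_nonneg fun j _ => hnn _)
          _ = C * (μ (s i) * ∏ j ∈ Finset.univ.erase i, μ (s j)) := by ring
    · rw [if_neg hB, if_neg (fun hand => absurd hand.1 (fun h => hB h))]
      rw [mul_zero, zero_add]
      exact hR2nn s
  -- summable lhs
  have hlhs_summable : Summable (fun s : Fin n → G =>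
      if (List.ofFn s).prod ∉ B then elli μ i s else 0) := by
    refine Summable.of_nonneg_of_le (fun s => ?_) (fun s => ?_)
      (hasSum_elli hnn h1 hH i).summable
    · split
      · exact elli_nonneg hnn h1 i s
      · exact le_refl 0
    · split
      · exact le_refl _
      · exact elli_nonneg hnn h1 i s
  calc ∑' s : Fin n → G, (if (List.ofFn s).prod ∉ B then elli μ i s else 0)
      ≤ ∑' s : Fin n → G,
          (C * (if ((List.ofFn s).prod ∉ B ∧ t ≤ μ (s i)) then ∏ j, μ (s j) else 0)
            + ∏ j, (if j = i then (if μ (s j) < t then Real.negMulLog (μ (s j)) else 0)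
                else μ (s j))) :=
        Summable.tsum_le_tsum hpoint hlhs_summable (hbig_summable.add hR2.summable)
    _ = (∑' s : Fin n → G,
          C * (if ((List.ofFn s).prod ∉ B ∧ t ≤ μ (s i)) then ∏ j, μ (s j) else 0))
        + ∑' s : Fin n → G,
            ∏ j, (if j = i then (if μ (s j) < t then Real.negMulLog (μ (s j)) else 0)
                else μ (s j)) := Summable.tsum_add hbig_summable hR2.summable
    _ ≤ C * (1 - ∑ g ∈ B, convPow μ n g)
        + ∑' x : G, (if μ x < t then Real.negMulLog (μ x) else 0) := by
        refine add_le_add ?_ (le_of_eq hR2.tsum_eq)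
        rw [tsum_mul_left]
        refine mul_le_mul_of_nonneg_left ?_ hC
        rw [← hcompl.tsum_eq]
        refine Summable.tsum_le_tsum (fun s => ?_)
          (summable_constrained hnn h1 (fun s => ite_P_nonneg hnn _ s)
            (fun s => ite_le_P hnn _ s)) hcompl.summable
        by_cases hB : (List.ofFn s).prod ∉ B
        · by_cases hbig : t ≤ μ (s i)
          · rw [if_pos ⟨hB, hbig⟩, if_pos hB]
          · rw [if_neg (fun hand => hbig hand.2), if_pos hB]
            exact hPnn s
        · rw [if_neg (fun hand => hB hand.1), if_neg hB]
end entbound2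

section jensen
variable {G : Type*} [Group G] {μ : G → ℝ}

lemma negMulLog_le_one {p : ℝ} (hp : 0 ≤ p) : Real.negMulLog p ≤ 1 := by
  rcases hp.eq_or_lt with h0 | hpos
  · rw [← h0, Real.negMulLog_zero]
    norm_num
  · have hlog := Real.log_le_sub_one_of_pos (inv_pos.2 hpos)
    rw [Real.log_inv] at hlog
    have h2 : p * (-Real.log p) ≤ p * (p⁻¹ - 1) := mul_le_mul_of_nonneg_left hlog hpos.le
    have h3 : p * p⁻¹ = 1 := mul_inv_cancel₀ hpos.ne'
    rw [Real.negMulLog]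
    nlinarith

lemma sum_negMulLog_convPow_le (hnn : ∀ g, 0 ≤ μ g) (h1 : HasSum μ 1)
    (n : ℕ) (B : Finset G) (S : Finset G) (hS : S ⊆ B) :
    ∑ g ∈ S, Real.negMulLog (convPow μ n g) ≤ 1 + Real.log B.card := by
  rcases S.eq_empty_or_nonempty with hSe | hSne
  · rw [hSe, Finset.sum_empty]
    have := Real.log_natCast_nonneg B.card
    linarith
  · set k : ℝ := (S.card : ℝ) with hk
    have hkpos : 0 < k := by
      rw [hk]
      exact_mod_cast Nat.pos_of_ne_zero (Finset.card_ne_zero_of_mem hSne.choose_spec)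
    set p : ℝ := ∑ g ∈ S, convPow μ n g with hp
    have hp0 : 0 ≤ p := Finset.sum_nonneg fun g _ => convPow_nonneg hnn n g
    have hp1 : p ≤ 1 := sum_le_hasSum S (fun g _ => convPow_nonneg hnn n g)
      (hasSum_convPow hnn h1 n)
    have hjensen : ∑ g ∈ S, k⁻¹ • Real.negMulLog (convPow μ n g)
        ≤ Real.negMulLog (∑ g ∈ S, k⁻¹ • convPow μ n g) := by
      refine Real.concaveOn_negMulLog.le_map_sum (fun g _ => ?_) ?_ (fun g _ => ?_)
      · positivity
      · rw [Finset.sum_const, nsmul_eq_mul]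
        field_simp
        exact hk.symm
      · exact Set.mem_Ici.2 (convPow_nonneg hnn n g)
    have hsmul : (∑ g ∈ S, k⁻¹ • convPow μ n g) = k⁻¹ * p := by
      rw [hp, Finset.mul_sum]
      exact Finset.sum_congr rfl fun g _ => by rw [smul_eq_mul]
    rw [hsmul] at hjensen
    have hmain : ∑ g ∈ S, Real.negMulLog (convPow μ n g) ≤ k * Real.negMulLog (k⁻¹ * p) := by
      have h4 : ∑ g ∈ S, Real.negMulLog (convPow μ n g)
          = k * ∑ g ∈ S, k⁻¹ • Real.negMulLog (convPow μ n g) := by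
        rw [Finset.mul_sum]
        refine Finset.sum_congr rfl fun g _ => ?_
        rw [smul_eq_mul, ← mul_assoc, mul_inv_cancel₀ hkpos.ne', one_mul]
      rw [h4]
      exact mul_le_mul_of_nonneg_left hjensen hkpos.le
    refine hmain.trans ?_
    have hlogk_le : Real.log k ≤ Real.log B.card := by
      refine Real.log_le_log hkpos ?_
      rw [hk]
      exact_mod_cast Finset.card_le_card hS
    have hlogk0 : 0 ≤ Real.log k := by
      rw [hk]
      exact Real.log_natCast_nonneg _
    rcases hp0.eq_or_lt with hp00 | hppos
    · rw [← hp00, mul_zero, Real.negMulLog_zero, mul_zero]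
      have := Real.log_natCast_nonneg B.card
      linarith
    · have hexpand : k * Real.negMulLog (k⁻¹ * p) = Real.negMulLog p + p * Real.log k := by
        rw [Real.negMulLog, Real.negMulLog,
          Real.log_mul (inv_ne_zero hkpos.ne') hppos.ne', Real.log_inv]
        field_simp
        ring
      rw [hexpand]
      have h5 : Real.negMulLog p ≤ 1 := negMulLog_le_one hp0
      have h6 : p * Real.log k ≤ Real.log B.card :=
        (mul_le_of_le_one_left hlogk0 hp1).trans hlogk_le
      linarith

lemma entropy_convPow_le (hnn : ∀ g, 0 ≤ μ g) (h1 : HasSum μ 1)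
    (hH : Summable fun g => Real.negMulLog (μ g)) (n : ℕ) (C : ℝ) (hC : 0 ≤ C)
    (B : Finset G) :
    entropy (convPow μ n) ≤ (1 + Real.log B.card)
      + n * (C * (1 - ∑ g ∈ B, convPow μ n g)
        + ∑' x : G, (if μ x < Real.exp (-C) then Real.negMulLog (μ x) else 0)) := by
  have hε : 0 ≤ 1 - ∑ g ∈ B, convPow μ n g :=
    sub_nonneg.2 (sum_le_hasSum B (fun g _ => convPow_nonneg hnn n g)
      (hasSum_convPow hnn h1 n))
  have htail0 : (0:ℝ) ≤ ∑' x : G, (if μ x < Real.exp (-C) then Real.negMulLog (μ x) else 0) := by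
    refine tsum_nonneg fun x => ?_
    split
    · exact negMulLog_mu_nonneg hnn h1 x
    · exact le_refl 0
  have hRHS0 : (0:ℝ) ≤ (1 + Real.log B.card)
      + n * (C * (1 - ∑ g ∈ B, convPow μ n g)
        + ∑' x : G, (if μ x < Real.exp (-C) then Real.negMulLog (μ x) else 0)) := by
    have := Real.log_natCast_nonneg B.card
    have hn0 : (0:ℝ) ≤ (n:ℝ) := Nat.cast_nonneg n
    nlinarith [mul_nonneg hC hε]
  rw [entropy]
  refine tsum_le_of_sum_le' hRHS0 fun F => ?_
  rw [← Finset.sum_inter_add_sum_sdiff F B (fun g => Real.negMulLog (convPow μ n g))]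
  refine add_le_add (sum_negMulLog_convPow_le hnn h1 n B _ Finset.inter_subset_right) ?_
  -- part 2
  have hEnn : ∀ s : Fin n → G, (0:ℝ) ≤ ∑ i, elli μ i s :=
    fun s => Finset.sum_nonneg fun i _ => elli_nonneg hnn h1 i s
  have hfib_summable : ∀ g : G, Summable (fun s : Fin n → G =>
      if (List.ofFn s).prod = g then ∑ i, elli μ i s else 0) := by
    intro g
    refine Summable.of_nonneg_of_le (fun s => ?_) (fun s => ?_) (summable_ellSum hnn h1 hH)
    · split
      · exact hEnn s
      · exact le_refl 0
    · split
      · exact le_refl _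
      · exact hEnn s
  have hout_summable : Summable (fun s : Fin n → G =>
      if (List.ofFn s).prod ∉ B then ∑ i, elli μ i s else 0) := by
    refine Summable.of_nonneg_of_le (fun s => ?_) (fun s => ?_) (summable_ellSum hnn h1 hH)
    · split
      · exact hEnn s
      · exact le_refl 0
    · split
      · exact le_refl _
      · exact hEnn s
  have hout_summable' : ∀ i : Fin n, Summable (fun s : Fin n → G =>
      if (List.ofFn s).prod ∉ B then elli μ i s else 0) := by
    intro i
    refine Summable.of_nonneg_of_le (fun s => ?_) (fun s => ?_)
      (hasSum_elli hnn h1 hH i).summable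
    · split
      · exact elli_nonneg hnn h1 i s
      · exact le_refl 0
    · split
      · exact le_refl _
      · exact elli_nonneg hnn h1 i s
  calc ∑ g ∈ F \ B, Real.negMulLog (convPow μ n g)
      ≤ ∑ g ∈ F \ B, ∑' s : Fin n → G,
          (if (List.ofFn s).prod = g then ∑ i, elli μ i s else 0) :=
        Finset.sum_le_sum fun g _ => negMulLog_convPow_le hnn h1 hH n g
    _ ≤ ∑' s : Fin n → G, (if (List.ofFn s).prod ∉ B then ∑ i, elli μ i s else 0) := by
        rw [← Summable.tsum_finsetSum (fun g _ => hfib_summable g)]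
        refine Summable.tsum_le_tsum (fun s => ?_)
          (summable_sum fun g _ => hfib_summable g) hout_summable
        rw [Finset.sum_ite_eq (F \ B) ((List.ofFn s).prod) (fun _ => ∑ i, elli μ i s)]
        by_cases hmem : (List.ofFn s).prod ∈ F \ B
        · rw [if_pos hmem, if_pos (Finset.mem_sdiff.1 hmem).2]
        · rw [if_neg hmem]
          split
          · exact hEnn s
          · exact le_refl 0
    _ = ∑' s : Fin n → G, ∑ i, (if (List.ofFn s).prod ∉ B then elli μ i s else 0) := by
        refine tsum_congr fun s => ?_
        by_cases hB : (List.ofFn s).prod ∉ B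
        · simp only [if_pos hB]
        · simp only [if_neg hB, Finset.sum_const_zero]
    _ = ∑ i, ∑' s : Fin n → G, (if (List.ofFn s).prod ∉ B then elli μ i s else 0) :=
        Summable.tsum_finsetSum fun i _ => hout_summable' i
    _ ≤ ∑ _i : Fin n, (C * (1 - ∑ g ∈ B, convPow μ n g)
          + ∑' x : G, (if μ x < Real.exp (-C) then Real.negMulLog (μ x) else 0)) :=
        Finset.sum_le_sum fun i _ => elli_constrained_le hnn h1 hH i C hC B
    _ = n * (C * (1 - ∑ g ∈ B, convPow μ n g)
          + ∑' x : G, (if μ x < Real.exp (-C) then Real.negMulLog (μ x) else 0)) := by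
        rw [Finset.sum_const, Finset.card_univ, Fintype.card_fin, nsmul_eq_mul]
end jensen


/-- If μ has finite entropy on a countable group G and there are finite
subsets A_n ⊂ G with (1/n) log|A_n| → 0 and μ^{*n}(A_n) → 1, then the asymptotic
entropy h(μ) = lim H(μ^{*n})/n equals 0. -/
theorem asymptotic_entropy_zero_of_subexponential_sets {G : Type*} [Group G] [Countable G]
    (μ : G → ℝ) (hnn : ∀ g, 0 ≤ μ g) (h1 : HasSum μ 1)
    (hH : Summable fun g => Real.negMulLog (μ g))
    (A : ℕ → Finset G)
    (hcard : Tendsto (fun n : ℕ => Real.log (A n).card / n) atTop (nhds 0))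
    (hA : Tendsto (fun n : ℕ => ∑ g ∈ A n, convPow μ n g) atTop (nhds 1)) :
    Tendsto (fun n : ℕ => entropy (convPow μ n) / n) atTop (nhds 0) := by
  have hlow : ∀ n : ℕ, 0 ≤ entropy (convPow μ n) / n := by
    intro n
    refine div_nonneg (tsum_nonneg fun g => Real.negMulLog_nonneg
      (convPow_nonneg hnn n g) (convPow_le_one hnn h1 n g)) (Nat.cast_nonneg n)
  refine tendsto_order.2 ⟨fun b hb => ?_, fun a ha => ?_⟩
  · filter_upwards with n
    exact lt_of_lt_of_le hb (hlow n)
  · -- choose a finite set carrying most of the entropy of μ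
    have ha4 : 0 < a / 4 := by linarith
    obtain ⟨F₀, hF₀⟩ : ∃ F₀ : Finset G,
        (∑' x : {x : G // x ∉ F₀}, Real.negMulLog (μ x)) < a / 4 :=
      ((tendsto_tsum_compl_atTop_zero fun x : G => Real.negMulLog (μ x)).eventually
        (gt_mem_nhds ha4)).exists
    set C : ℝ := ((F₀.sup fun x => ⌈-Real.log (μ x)⌉₊ : ℕ) : ℝ) with hCdef
    have hC : 0 ≤ C := Nat.cast_nonneg _
    -- tail bound
    have htail_le : (∑' x : G, if μ x < Real.exp (-C) then Real.negMulLog (μ x) else 0)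
        ≤ a / 4 := by
      have hpt : ∀ x : G, (if μ x < Real.exp (-C) then Real.negMulLog (μ x) else 0)
          ≤ (if x ∈ F₀ then 0 else Real.negMulLog (μ x)) := by
        intro x
        by_cases hx : x ∈ F₀
        · rw [if_pos hx]
          by_cases hμ0 : μ x = 0
          · split
            · rw [hμ0, Real.negMulLog_zero]
            · exact le_refl 0
          · have hpos : 0 < μ x := lt_of_le_of_ne (hnn x) (Ne.symm hμ0)
            have hlogC : -Real.log (μ x) ≤ C := by
              calc -Real.log (μ x) ≤ (⌈-Real.log (μ x)⌉₊ : ℝ) := Nat.le_ceil _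
                _ ≤ C := by
                    rw [hCdef]
                    exact Nat.cast_le.2 (Finset.le_sup (f := fun x => ⌈-Real.log (μ x)⌉₊) hx)
            have hge : Real.exp (-C) ≤ μ x := by
              calc Real.exp (-C) ≤ Real.exp (Real.log (μ x)) :=
                    Real.exp_le_exp.2 (by linarith)
                _ = μ x := Real.exp_log hpos
            rw [if_neg (not_lt.2 hge)]
        · rw [if_neg hx]
          split
          · exact le_refl _
          · exact negMulLog_mu_nonneg hnn h1 x
      have hrhs_summable : Summable (fun x : G => if x ∈ F₀ then 0 else Real.negMulLog (μ x)) := by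
        refine Summable.of_nonneg_of_le (fun x => ?_) (fun x => ?_) hH
        · split
          · exact le_refl 0
          · exact negMulLog_mu_nonneg hnn h1 x
        · split
          · exact negMulLog_mu_nonneg hnn h1 x
          · exact le_refl _
      have hlhs_summable : Summable
          (fun x : G => if μ x < Real.exp (-C) then Real.negMulLog (μ x) else 0) := by
        refine Summable.of_nonneg_of_le (fun x => ?_) (fun x => ?_) hH
        · split
          · exact negMulLog_mu_nonneg hnn h1 x
          · exact le_refl 0
        · split
          · exact le_refl _
          · exact negMulLog_mu_nonneg hnn h1 x
      have hstep := Summable.tsum_le_tsum hpt hlhs_summable hrhs_summable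
      refine hstep.trans ?_
      have hsub : (∑' x : {x : G // x ∉ F₀}, Real.negMulLog (μ x))
          = ∑' x : G, Set.indicator {x : G | x ∉ F₀} (fun x => Real.negMulLog (μ x)) x :=
        tsum_subtype {x : G | x ∉ F₀} (fun x => Real.negMulLog (μ x))
      have hsub2 : (∑' x : G, if x ∈ F₀ then 0 else Real.negMulLog (μ x))
          = ∑' x : {x : G // x ∉ F₀}, Real.negMulLog (μ x) := by
        rw [hsub]
        refine tsum_congr fun x => ?_
        by_cases hx : x ∈ F₀
        · rw [if_pos hx, Set.indicator_of_notMem (by simpa using hx)]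
        · rw [if_neg hx, Set.indicator_of_mem (by simpa using hx)]
      rw [hsub2]
      exact hF₀.le
    -- epsilon tends to zero
    have hε : Tendsto (fun n : ℕ => C * (1 - ∑ g ∈ A n, convPow μ n g)) atTop (nhds 0) := by
      have h2 : Tendsto (fun n : ℕ => 1 - ∑ g ∈ A n, convPow μ n g) atTop (nhds 0) := by
        have := hA.const_sub 1
        simpa using this
      simpa using h2.const_mul C
    have ev1 : ∀ᶠ n : ℕ in atTop, 1 / (n : ℝ) < a / 4 :=
      tendsto_one_div_atTop_nhds_zero_nat.eventually (gt_mem_nhds ha4)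
    have ev2 : ∀ᶠ n : ℕ in atTop, Real.log (A n).card / n < a / 4 :=
      hcard.eventually (gt_mem_nhds ha4)
    have ev3 : ∀ᶠ n : ℕ in atTop, C * (1 - ∑ g ∈ A n, convPow μ n g) < a / 4 :=
      hε.eventually (gt_mem_nhds ha4)
    have ev4 : ∀ᶠ n : ℕ in atTop, 1 ≤ n := eventually_ge_atTop 1
    filter_upwards [ev1, ev2, ev3, ev4] with n h1' h2' h3' h4'
    have hnpos : (0:ℝ) < (n : ℝ) := by exact_mod_cast h4'
    have hbound := entropy_convPow_le hnn h1 hH n C hC (A n)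
    have hdiv : entropy (convPow μ n) / n
        ≤ ((1 + Real.log (A n).card) + n * (C * (1 - ∑ g ∈ A n, convPow μ n g)
          + ∑' x : G, (if μ x < Real.exp (-C) then Real.negMulLog (μ x) else 0))) / n :=
      (div_le_div_iff_of_pos_right hnpos).2 hbound
    have heq : ((1 + Real.log (A n).card) + n * (C * (1 - ∑ g ∈ A n, convPow μ n g)
          + ∑' x : G, (if μ x < Real.exp (-C) then Real.negMulLog (μ x) else 0))) / n
        = 1 / n + Real.log (A n).card / n
          + (C * (1 - ∑ g ∈ A n, convPow μ n g)
            + ∑' x : G, (if μ x < Real.exp (-C) then Real.negMulLog (μ x) else 0)) := by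
      field_simp
    calc entropy (convPow μ n) / n ≤ _ := hdiv
      _ = _ := heq
      _ < a := by linarith
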